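/- arXiv:1404.2824 — 2 statements merged into one kernel-verified Lean document; each statement's English description precedes it below -/
import Mathlib

section
/- The sequence crit(n)/pnw(n) has lim inf equal to 0 as n → ∞; that is, for every ε > 0 and every N there exists n ≥ N with crit(n)/pnw(n) < ε. -/
/-- A binary word (list of Booleans, `true` = 1) is prefix normal if no substring
has more 1s than the prefix of the same length. -/
def IsPrefixNormal (w : List Bool) : Prop :=
  ∀ u : List Bool, u <:+: w → u.count true ≤ (w.take u.length).count true

/-- The number of prefix normal words of length `n`. -/
noncomputable def pnw (n : ℕ) : ℕ :=
  Nat.card {w : List Bool // w.length = n ∧ IsPrefixNormal w}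

/-- The number of extension-critical prefix normal words of length `n`:
prefix normal words `w` such that `w1` is not prefix normal. -/
noncomputable def crit (n : ℕ) : ℕ :=
  Nat.card {w : List Bool // w.length = n ∧ IsPrefixNormal w ∧
    ¬ IsPrefixNormal (w ++ [true])}

set_option linter.unusedVariables false
set_option linter.unreachableTactic false
set_option linter.unusedTactic false
set_option linter.unnecessarySeqFocus false

lemma finite_aux (n : ℕ) (p : List Bool → Prop) :
    Finite {w : List Bool // w.length = n ∧ p w} := by
  have h := List.finite_length_eq Bool n
  haveI := h.to_subtype
  exact Finite.of_injective
    (fun w => (⟨w.1, w.2.1⟩ : {l : List Bool | l.length = n}))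
    (by intro a b hab; ext1; simpa using congrArg Subtype.val hab)

lemma pn_replicate_false (n : ℕ) : IsPrefixNormal (List.replicate n false) := by
  intro u hu
  have h := hu.sublist.count_le true
  simp [List.count_replicate] at h
  simp [h]

lemma pnw_pos (n : ℕ) : 0 < pnw n := by
  haveI := finite_aux n IsPrefixNormal
  haveI : Nonempty {w : List Bool // w.length = n ∧ IsPrefixNormal w} :=
    ⟨⟨List.replicate n false, by simp, pn_replicate_false n⟩⟩
  exact Nat.card_pos

lemma pn_prefix {w u : List Bool} (h : u <+: w) (hw : IsPrefixNormal w) :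
    IsPrefixNormal u := by
  intro v hv
  have hvw : v <:+: w := hv.trans h.isInfix
  have h2 := hw v hvw
  have hlen : v.length ≤ u.length := hv.length_le
  have : u.take v.length = w.take v.length := by
    obtain ⟨t, rfl⟩ := h
    rw [List.take_append_of_le_length hlen]
  rw [this]; exact h2

lemma hinj_aux (n : ℕ) : pnw (n+1) ≤
      Nat.card {w : List Bool // w.length = n ∧ IsPrefixNormal w ∧ IsPrefixNormal (w ++ [true])} +
      pnw n := by
  classical
  haveI FB : Finite {w : List Bool // w.length = n ∧ IsPrefixNormal w ∧ IsPrefixNormal (w ++ [true])} :=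
    finite_aux n _
  haveI FC : Finite {w : List Bool // w.length = n ∧ IsPrefixNormal w} := finite_aux n _
  have key : ∀ v : {w : List Bool // w.length = (n+1) ∧ IsPrefixNormal w}, v.1 ≠ [] := by
    intro v h
    have := v.2.1
    rw [h] at this; simp at this
  unfold pnw
  rw [← Nat.card_sum]
  refine Nat.card_le_card_of_injective (fun v =>
    if hb : v.1.getLast (key v) = true then
      Sum.inl ⟨v.1.dropLast, by
        have := v.2.1; simp [List.length_dropLast, this], by
        exact pn_prefix (List.dropLast_prefix _) v.2.2, by
        rw [← hb, List.dropLast_append_getLast (key v)]; exact v.2.2⟩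
    else
      Sum.inr ⟨v.1.dropLast, by
        have := v.2.1; simp [List.length_dropLast, this], by
        exact pn_prefix (List.dropLast_prefix _) v.2.2⟩) ?_
  intro a b hab
  by_cases ha : a.1.getLast (key a) = true <;> by_cases hb : b.1.getLast (key b) = true <;>
    simp [ha, hb] at hab <;> ext1
  · rw [← List.dropLast_append_getLast (key a), ← List.dropLast_append_getLast (key b), ha, hb, hab]
  · rw [← List.dropLast_append_getLast (key a), ← List.dropLast_append_getLast (key b),
      Bool.not_eq_true _ |>.mp ha, Bool.not_eq_true _ |>.mp hb, hab]

lemma pnw_crit_rec (n : ℕ) : pnw (n+1) + crit n ≤ 2 * pnw n := by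
  classical
  haveI FB : Finite {w : List Bool // w.length = n ∧ IsPrefixNormal w ∧ IsPrefixNormal (w ++ [true])} :=
    finite_aux n _
  haveI FC : Finite {w : List Bool // w.length = n ∧ IsPrefixNormal w} := finite_aux n _
  haveI Fcrit : Finite {w : List Bool // w.length = n ∧ IsPrefixNormal w ∧ ¬ IsPrefixNormal (w ++ [true])} :=
    finite_aux n _
  have hsplit : pnw n =
      Nat.card {w : List Bool // w.length = n ∧ IsPrefixNormal w ∧ IsPrefixNormal (w ++ [true])} + crit n := by
    unfold pnw crit
    rw [← Nat.card_sum]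
    apply Nat.card_congr
    refine Equiv.symm ?_
    calc ({w : List Bool // w.length = n ∧ IsPrefixNormal w ∧ IsPrefixNormal (w ++ [true])} ⊕
          {w : List Bool // w.length = n ∧ IsPrefixNormal w ∧ ¬ IsPrefixNormal (w ++ [true])})
        ≃ ({w : List Bool // (w.length = n ∧ IsPrefixNormal w) ∧ IsPrefixNormal (w ++ [true])} ⊕
          {w : List Bool // (w.length = n ∧ IsPrefixNormal w) ∧ ¬ IsPrefixNormal (w ++ [true])}) :=
          Equiv.sumCongr (Equiv.subtypeEquivRight (fun x => by tauto))
            (Equiv.subtypeEquivRight (fun x => by tauto))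
      _ ≃ ({w : {w : List Bool // w.length = n ∧ IsPrefixNormal w} // IsPrefixNormal (w.1 ++ [true])} ⊕
          {w : {w : List Bool // w.length = n ∧ IsPrefixNormal w} // ¬ IsPrefixNormal (w.1 ++ [true])}) :=
          Equiv.sumCongr (Equiv.subtypeSubtypeEquivSubtypeInter _ _).symm
            (Equiv.subtypeSubtypeEquivSubtypeInter _ _).symm
      _ ≃ {w : List Bool // w.length = n ∧ IsPrefixNormal w} :=
          Equiv.sumCompl _
  have h2 := hinj_aux n
  omega

lemma cnt_take_le (l : List Bool) (i : ℕ) : (l.take i).count true ≤ i := by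
  calc (l.take i).count true ≤ (l.take i).length := List.count_le_length
  _ ≤ i := by simp [List.length_take]

lemma cnt_split (l : List Bool) (a b : ℕ) :
    (l.take a).count true + ((l.drop a).take b).count true = (l.take (a+b)).count true := by
  rw [List.take_add, List.count_append]

lemma cnt_lip (l : List Bool) (a b : ℕ) :
    (l.take (a+b)).count true ≤ (l.take a).count true + b := by
  rw [← cnt_split]
  exact Nat.add_le_add_left (cnt_take_le _ _) _

lemma cnt_tf (l : List Bool) : l.count true + l.count false = l.length := by
  induction l with
  | nil => simp
  | cons h t ih => cases h <;> simp [List.count_cons] <;> omega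

/-- both-sided density bounds for prefixes of a concatenation of balanced blocks -/
lemma Qbounds (r : ℕ) (L : List (List Bool))
    (hL : ∀ B ∈ L, B.length = 2*r ∧ B.count true = r) (ℓ : ℕ) :
    2 * ((L.flatten.take ℓ).count true) ≤ ℓ + 2*r ∧
    (ℓ ≤ L.flatten.length → ℓ ≤ 2*((L.flatten.take ℓ).count true) + 2*r) := by
  induction L generalizing ℓ with
  | nil =>
    refine ⟨by simp, fun h => ?_⟩
    simp at h
    simp [h]
  | cons B L ih =>
    have hB := hL B (by simp)
    have hL' : ∀ B ∈ L, B.length = 2*r ∧ B.count true = r := fun C hC => hL C (by simp [hC])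
    rcases le_or_gt ℓ (2*r) with h | h
    · have ht : (B :: L).flatten.take ℓ = B.take ℓ := by
        simp only [List.flatten_cons]
        exact List.take_append_of_le_length (by rw [hB.1]; exact h)
      constructor
      · rw [ht]
        have : (B.take ℓ).count true ≤ B.count true := (List.take_sublist _ _).count_le _
        omega
      · intro _
        rw [ht]
        have h1 : (B.take ℓ).count false ≤ B.count false := (List.take_sublist _ _).count_le _
        have h2 := cnt_tf (B.take ℓ)
        have h3 := cnt_tf B
        have h4 : (B.take ℓ).length = ℓ := by
          rw [List.length_take]; rw [hB.1] at *; omega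
        omega
    · obtain ⟨m, rfl⟩ : ∃ m, ℓ = 2*r + m := ⟨ℓ - 2*r, by omega⟩
      have ht : (B :: L).flatten.take (2*r+m) = B ++ L.flatten.take m := by
        simp only [List.flatten_cons]
        rw [← hB.1, List.take_length_add_append]
      have hcnt : ((B :: L).flatten.take (2*r+m)).count true = r + (L.flatten.take m).count true := by
        rw [ht, List.count_append, hB.2]
      have hlen : (B :: L).flatten.length = 2*r + L.flatten.length := by
        simp [List.flatten_cons, hB.1]
      obtain ⟨ih1, ih2⟩ := ih hL' m
      constructor
      · omega
      · intro hle
        have := ih2 (by omega)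
        omega

/-- main window inequality for the constructed word -/
lemma main_ineq (r : ℕ) (L : List (List Bool))
    (hL : ∀ B ∈ L, B.length = 2*r ∧ B.count true = r) (a b : ℕ)
    (hab : a + b ≤ 8*r + L.flatten.length) :
    (((List.replicate (8*r) true ++ L.flatten).drop a).take b).count true ≤
      ((List.replicate (8*r) true ++ L.flatten).take b).count true := by
  set k := 8*r with hk
  set z := L.flatten with hz
  set w := List.replicate k true ++ z with hwdef
  have hrep : ∀ i, i ≤ k → (w.take i).count true = i := by
    intro i hi
    rw [hwdef, List.take_append_of_le_length (by simpa using hi), List.take_replicate]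
    simp [List.count_replicate]
    omega
  rcases le_or_gt b k with hbk | hbk
  · rw [hrep b hbk]
    calc ((w.drop a).take b).count true ≤ ((w.drop a).take b).length := List.count_le_length
    _ ≤ b := by simp [List.length_take]
  · obtain ⟨m, rfl⟩ : ∃ m, b = k + m := ⟨b - k, by omega⟩
    have hPb : (w.take (k+m)).count true = k + (z.take m).count true := by
      rw [hwdef]
      rw [show k + m = (List.replicate k true).length + m by simp, List.take_append,
        List.count_append]
      simp [List.count_replicate]
    rw [hPb]
    rcases le_or_gt a k with hak | hak
    · have hdrop2 : w.drop a = List.replicate (k-a) true ++ z := by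
        rw [hwdef, List.drop_append_of_le_length (by simpa using hak), List.drop_replicate]
      have hsplit2 : (w.drop a).take (k+m) = List.replicate (k-a) true ++ z.take (k+m-(k-a)) := by
        rw [hdrop2, show k + m = (List.replicate (k-a) true).length + (k+m-(k-a)) by
          simp; omega, List.take_append]
        simp
      have hcnt : ((w.drop a).take (k+m)).count true = (k-a) + (z.take (a+m)).count true := by
        rw [hsplit2, List.count_append]
        simp [List.count_replicate]
        congr 2
        omega
      have hlip : (z.take (a+m)).count true ≤ (z.take m).count true + a := by
        have := cnt_lip z m a
        rw [show m + a = a + m by omega] at this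
        exact this
      omega
    · obtain ⟨c, rfl⟩ : ∃ c, a = k + c := ⟨a - k, by omega⟩
      have hdrop3 : w.drop (k+c) = z.drop c := by
        rw [hwdef, show k + c = (List.replicate k true).length + c by simp, List.drop_length_add_append]
      have hcnt : (z.take c).count true + ((w.drop (k+c)).take (k+m)).count true
          = (z.take (c + (k+m))).count true := by
        rw [hdrop3]; exact cnt_split z c (k+m)
      obtain ⟨up1, _⟩ := Qbounds r L hL (c + (k+m))
      obtain ⟨_, lo1⟩ := Qbounds r L hL c
      obtain ⟨_, lo2⟩ := Qbounds r L hL m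
      rw [← hz] at up1 lo1 lo2
      have h1 := lo1 (by omega)
      have h2 := lo2 (by omega)
      omega

/-- the constructed word is prefix normal -/
lemma pn_construct (r : ℕ) (L : List (List Bool))
    (hL : ∀ B ∈ L, B.length = 2*r ∧ B.count true = r) :
    IsPrefixNormal (List.replicate (8*r) true ++ L.flatten) := by
  intro u hu
  obtain ⟨s, t, hw⟩ := hu
  set w := List.replicate (8*r) true ++ L.flatten with hwdef
  have hdrop : w.drop s.length = u ++ t := by
    rw [← hw, List.append_assoc, List.drop_left]
  have hu' : (w.drop s.length).take u.length = u := by rw [hdrop, List.take_left]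
  have hab : s.length + u.length ≤ 8*r + L.flatten.length := by
    have h1 : w.length = s.length + (u.length + t.length) := by rw [← hw]; simp
    have h2 : w.length = 8*r + L.flatten.length := by simp [hwdef]
    omega
  calc u.count true = ((w.drop s.length).take u.length).count true := by rw [hu']
  _ ≤ (w.take u.length).count true := main_ineq r L hL _ _ hab

lemma cnt_as_sum (l : List Bool) :
    l.count true = (l.map (fun b => if b then 1 else 0)).sum := by
  induction l with
  | nil => simp
  | cons h t ih => cases h <;> simp [List.count_cons, ih] <;> omega

def blk (r : ℕ) (S : Finset (Fin (2*r))) : List Bool :=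
  List.ofFn (fun i => decide (i ∈ S))

lemma blk_len (r : ℕ) (S : Finset (Fin (2*r))) : (blk r S).length = 2*r := by
  simp [blk]

lemma blk_cnt (r : ℕ) (S : Finset (Fin (2*r))) : (blk r S).count true = S.card := by
  rw [blk, cnt_as_sum, List.map_ofFn, List.sum_ofFn]
  simp

lemma blk_inj (r : ℕ) : Function.Injective (blk r) := by
  intro S T h
  have h2 := List.ofFn_injective h
  ext i
  have := congrFun h2 i
  simpa using this

lemma flatten_inj (m : ℕ) (hm : 0 < m) : ∀ (L₁ L₂ : List (List Bool)),
    (∀ B ∈ L₁, B.length = m) → (∀ B ∈ L₂, B.length = m) →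
    L₁.length = L₂.length → L₁.flatten = L₂.flatten → L₁ = L₂ := by
  intro L₁
  induction L₁ with
  | nil => intro L₂ _ _ hlen _; cases L₂ <;> simp_all
  | cons B L ih =>
    intro L₂ h1 h2 hlen hf
    cases L₂ with
    | nil => simp at hlen
    | cons C M =>
      simp only [List.flatten_cons] at hf
      have hBC : B = C ∧ L.flatten = M.flatten := by
        apply List.append_inj hf
        rw [h1 B (by simp), h2 C (by simp)]
      obtain ⟨rfl, hLM⟩ := hBC
      have := ih M (fun X hX => h1 X (by simp [hX])) (fun X hX => h2 X (by simp [hX]))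
        (by simpa using hlen) hLM
      rw [this]

set_option maxHeartbeats 1000000 in
lemma pnw_lower (r t : ℕ) (hr : 0 < r) : ((2*r).choose r)^t ≤ pnw (8*r + 2*r*t) := by
  classical
  haveI := finite_aux (8*r + 2*r*t) IsPrefixNormal
  have hmem : ∀ (f : Fin t → {S : Finset (Fin (2*r)) // S.card = r}),
      ∀ B ∈ (List.ofFn (fun j => blk r (f j).1)), B.length = 2*r ∧ B.count true = r := by
    intro f B hB
    rw [List.mem_ofFn] at hB
    obtain ⟨j, rfl⟩ := hB
    exact ⟨blk_len r _, by rw [blk_cnt]; exact (f j).2⟩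
  have hlen : ∀ (f : Fin t → {S : Finset (Fin (2*r)) // S.card = r}),
      (List.replicate (8*r) true ++ (List.ofFn (fun j => blk r (f j).1)).flatten).length
        = 8*r + 2*r*t := by
    intro f
    simp [List.length_flatten, List.map_ofFn, Function.comp_def, blk_len,
      List.sum_ofFn, Finset.sum_const, mul_comm]
  have key : ((2*r).choose r)^t ≤
      Nat.card {w : List Bool // w.length = 8*r + 2*r*t ∧ IsPrefixNormal w} := by
    have hcard : Nat.card (Fin t → {S : Finset (Fin (2*r)) // S.card = r})
        = ((2*r).choose r)^t := by
      rw [Nat.card_fun]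
      congr 1
      · rw [Nat.card_eq_fintype_card, Fintype.card_finset_len]
        simp
      · simp
    rw [← hcard]
    apply Nat.card_le_card_of_injective (f := fun f =>
      (⟨List.replicate (8*r) true ++ (List.ofFn (fun j => blk r (f j).1)).flatten,
        hlen f, pn_construct r _ (hmem f)⟩ :
        {w : List Bool // w.length = 8*r + 2*r*t ∧ IsPrefixNormal w}))
    intro f g h
    have h1 : (List.ofFn (fun j => blk r (f j).1)).flatten
        = (List.ofFn (fun j => blk r (g j).1)).flatten := by
      have := congrArg Subtype.val h
      exact List.append_cancel_left this
    have h2 : (List.ofFn (fun j => blk r (f j).1)) = (List.ofFn (fun j => blk r (g j).1)) :=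
      flatten_inj (2*r) (by omega) _ _ (fun B hB => (by
        rw [List.mem_ofFn] at hB; obtain ⟨j, rfl⟩ := hB; exact blk_len r _))
        (fun B hB => (by
        rw [List.mem_ofFn] at hB; obtain ⟨j, rfl⟩ := hB; exact blk_len r _))
        (by simp) h1
    have h3 := List.ofFn_injective h2
    funext j
    have := congrFun h3 j
    exact Subtype.ext (blk_inj r this)
  exact key.trans (le_of_eq rfl)
lemma two_mul_le_two_pow : ∀ m : ℕ, 2 ≤ m → 2*m ≤ 2^m := by
  intro m hm
  induction m with
  | zero => omega
  | succ k ih =>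
    rcases Nat.lt_or_ge k 2 with h | h
    · interval_cases k <;> simp <;> omega
    · have := ih (by omega)
      have h2 : 2^k ≥ 2 := by
        calc 2^k ≥ 2^1 := Nat.pow_le_pow_right (by omega) (by omega)
        _ = 2 := by norm_num
      rw [pow_succ]
      omega

lemma nat_key (m : ℕ) (hm : 2 ≤ m) : m * 2^m < 2^(2^m) := by
  have h1 : 2*m ≤ 2^m := two_mul_le_two_pow m hm
  calc m * 2^m < 2^m * 2^m := by
        have h2 : m < 2^m := Nat.lt_two_pow_self
        have h3 : 0 < 2^m := Nat.pow_pos (by omega)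
        exact Nat.mul_lt_mul_of_lt_of_le h2 le_rfl h3
  _ = 2^(m + m) := by rw [pow_add]
  _ ≤ 2^(2^m) := Nat.pow_le_pow_right (by omega) (by omega)

theorem liminf_crit_ratio_zero :
    ∀ ε : ℝ, 0 < ε → ∀ N : ℕ, ∃ n : ℕ, N ≤ n ∧ (crit n : ℝ) / (pnw n : ℝ) < ε := by
  intro ε hε N
  by_contra hcon
  push_neg at hcon
  have hpos : ∀ n : ℕ, (0:ℝ) < pnw n := fun n => by exact_mod_cast pnw_pos n
  have hone : ∀ n : ℕ, (1:ℝ) ≤ pnw n := fun n => by exact_mod_cast pnw_pos n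
  have hcrit : ∀ n, N ≤ n → ε * pnw n ≤ crit n := by
    intro n hn
    have h1 := hcon n hn
    rw [le_div_iff₀ (hpos n)] at h1
    linarith
  have hstep : ∀ n, N ≤ n → (pnw (n+1):ℝ) ≤ (2-ε) * pnw n := by
    intro n hn
    have h1 : (pnw (n+1):ℝ) + crit n ≤ 2 * pnw n := by exact_mod_cast pnw_crit_rec n
    have h2 := hcrit n hn
    nlinarith
  set q : ℝ := 2 - ε with hqdef
  have hq0 : 0 < q := by
    by_contra hq
    push_neg at hq
    have h1 := hstep N le_rfl
    have h2 := hone (N+1)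
    have h3 := hpos N
    nlinarith
  have hq2 : q < 2 := by rw [hqdef]; linarith
  have hgeom : ∀ s : ℕ, (pnw (N+s):ℝ) ≤ pnw N * q^s := by
    intro s
    induction s with
    | zero => simp
    | succ k ih =>
      have h1 : (pnw (N+k+1):ℝ) ≤ q * pnw (N+k) := by
        have := hstep (N+k) (by omega)
        linarith
      calc (pnw (N+(k+1)):ℝ) = (pnw (N+k+1):ℝ) := by ring_nf
      _ ≤ q * pnw (N+k) := h1
      _ ≤ q * (pnw N * q^k) := by
          apply mul_le_mul_of_nonneg_left ih (le_of_lt hq0)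
      _ = pnw N * q^(k+1) := by ring
  -- choose the block size parameter r
  set x : ℝ := 4 / q^2 with hxdef
  have hq2pos : 0 < q^2 := by positivity
  have hx1 : 1 < x := by
    rw [hxdef, lt_div_iff₀ hq2pos]
    nlinarith
  obtain ⟨m₀, hm₀⟩ := pow_unbounded_of_one_lt (2:ℝ) hx1
  set m : ℕ := max (max m₀ 2) (max 4 N) with hmdef
  have hm2 : (2:ℝ) < x^m := by
    calc (2:ℝ) < x^m₀ := hm₀
    _ ≤ x^m := pow_le_pow_right₀ (le_of_lt hx1) (by omega)
  set r : ℕ := m * 2^m with hrdef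
  have hm2' : 2 ≤ m := by omega
  have hr4 : 4 ≤ r := by
    have : m ≤ r := by
      rw [hrdef]
      calc m = m * 1 := by ring
      _ ≤ m * 2^m := Nat.mul_le_mul_left m (Nat.one_le_two_pow)
    omega
  have hrN : N ≤ r := by
    have : m ≤ r := by
      calc m = m * 1 := by ring
      _ ≤ m * 2^m := Nat.mul_le_mul_left m (Nat.one_le_two_pow)
    omega
  -- r < x^r
  have hxr : (r:ℝ) < x^r := by
    have hnat : r < 2^(2^m) := by rw [hrdef]; exact nat_key m hm2'
    have h1 : (r:ℝ) < (2:ℝ)^(2^m) := by exact_mod_cast hnat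
    have h2 : (2:ℝ)^(2^m) ≤ (x^m)^(2^m) := by
      apply pow_le_pow_left₀ (by norm_num) (le_of_lt hm2)
    calc (r:ℝ) < (2:ℝ)^(2^m) := h1
    _ ≤ (x^m)^(2^m) := h2
    _ = x^r := by rw [← pow_mul, hrdef]
  -- hence r * q^(2r) < 4^r
  have hq2r : (r:ℝ) * q^(2*r) < 4^r := by
    have hxr2 : x^r = 4^r / q^(2*r) := by
      rw [hxdef, div_pow, ← pow_mul, mul_comm 2 r]
    have hq2rpos : (0:ℝ) < q^(2*r) := by positivity
    rw [hxr2] at hxr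
    rw [← lt_div_iff₀ hq2rpos]
    exact hxr
  -- central binomial lower bound
  set c : ℝ := ((2*r).choose r : ℝ) with hcdef
  have hcb : (4:ℝ)^r < r * c := by
    have h1 := Nat.four_pow_lt_mul_centralBinom r (by omega)
    have h2 : Nat.centralBinom r = (2*r).choose r := rfl
    rw [h2] at h1
    rw [hcdef]
    exact_mod_cast h1
  have hdc : q^(2*r) < c := by
    have hr0 : (0:ℝ) < r := by
      have : (4:ℝ) ≤ r := by exact_mod_cast hr4
      linarith
    have h1 : (r:ℝ) * q^(2*r) < r * c := lt_trans hq2r hcb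
    exact lt_of_mul_lt_mul_left h1 (le_of_lt hr0)
  have hd0 : (0:ℝ) < q^(2*r) := by positivity
  have hcd1 : 1 < c / q^(2*r) := (one_lt_div hd0).2 hdc
  obtain ⟨t, ht⟩ := pow_unbounded_of_one_lt ((pnw N : ℝ) * q^(8*r - N)) hcd1
  have hn : N + ((8*r - N) + 2*r*t) = 8*r + 2*r*t := by omega
  have hupper : (pnw (8*r + 2*r*t):ℝ) ≤ (pnw N * q^(8*r-N)) * (q^(2*r))^t := by
    have h1 := hgeom ((8*r - N) + 2*r*t)
    rw [hn] at h1
    rw [pow_add, pow_mul] at h1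
    calc (pnw (8*r + 2*r*t):ℝ) ≤ pnw N * (q^(8*r-N) * (q^(2*r))^t) := h1
    _ = (pnw N * q^(8*r-N)) * (q^(2*r))^t := by ring
  have hlower : c^t ≤ (pnw (8*r+2*r*t):ℝ) := by
    have := pnw_lower r t (by omega)
    rw [hcdef]
    calc (((2*r).choose r : ℝ))^t = (((2*r).choose r)^t : ℕ) := by push_cast; ring
    _ ≤ ((pnw (8*r+2*r*t) : ℕ) : ℝ) := by exact_mod_cast this
  have h2 : (pnw N * q^(8*r-N)) * (q^(2*r))^t < (c/q^(2*r))^t * (q^(2*r))^t := by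
    apply mul_lt_mul_of_pos_right ht (by positivity)
  have h3 : (c/q^(2*r))^t * (q^(2*r))^t = c^t := by
    rw [div_pow, div_mul_cancel₀]
    positivity
  linarith
end

section
/- Run-length rejection test: let w be a binary word written as a concatenation of maximal blocks B₁B₂⋯B_c, where block B_i = 1^(s_i)·0^(t_i) (with s_i, t_i the lengths of the maximal 1-run and following 0-run). If there exists an index i with 2 ≤ i ≤ c such that s_{i−1} + t_{i−1} + s_i ≤ s₁ + t₁ and s_{i−1} + s_i > s₁, then w is not prefix normal. -/
theorem runLength_rejection (c : ℕ) (hc : 1 ≤ c) (s t : ℕ → ℕ)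
    (hblocks : ∀ i, 1 ≤ i → i ≤ c → 1 ≤ s i + t i)
    (hmax1 : ∀ i, 2 ≤ i → i ≤ c → 1 ≤ s i)
    (hmax0 : ∀ i, 1 ≤ i → i ≤ c - 1 → 1 ≤ t i)
    (i : ℕ) (hi2 : 2 ≤ i) (hic : i ≤ c)
    (hlen : s (i - 1) + t (i - 1) + s i ≤ s 1 + t 1)
    (hones : s 1 < s (i - 1) + s i) :
    ¬ IsPrefixNormal (((List.range c).map
        (fun j => List.replicate (s (j + 1)) true ++
          List.replicate (t (j + 1)) false)).flatten) := by
  intro hpn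
  set f : ℕ → List Bool := fun j => List.replicate (s (j + 1)) true ++
      List.replicate (t (j + 1)) false with hf
  obtain ⟨k, rfl⟩ : ∃ k, i = k + 2 := ⟨i - 2, by omega⟩
  obtain ⟨m, rfl⟩ : ∃ m, c = k + 2 + m := ⟨c - (k + 2), by omega⟩
  have hsub : k + 2 - 1 = k + 1 := by omega
  rw [hsub] at hlen hones
  set w : List Bool := ((List.range (k + 2 + m)).map f).flatten with hw
  set u : List Bool := List.replicate (s (k + 1)) true ++
      List.replicate (t (k + 1)) false ++ List.replicate (s (k + 2)) true with hu
  have hinf : u <:+: w := by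
    refine ⟨((List.range k).map f).flatten,
      List.replicate (t (k + 2)) false ++ ((List.range m).map (fun x => f (k + 2 + x))).flatten, ?_⟩
    rw [hw, List.range_add, List.range_add]
    simp [hf, hu, List.map_map, Function.comp_def, List.range_succ, List.append_assoc]
  have hcount : u.count true = s (k + 1) + s (k + 2) := by
    simp [hu, List.count_append, List.count_replicate]
  have hulen : u.length = s (k + 1) + t (k + 1) + s (k + 2) := by
    simp [hu]; omega
  have hf0 : f 0 = List.replicate (s 1) true ++ List.replicate (t 1) false := rfl
  have htake : (w.take u.length).count true ≤ s 1 := by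
    have hsplit : w = f 0 ++ ((List.range (k + 1 + m)).map (fun x => f (x + 1))).flatten := by
      rw [hw, show k + 2 + m = (k + 1 + m) + 1 by omega, List.range_succ_eq_map]
      simp only [List.map_cons, List.flatten_cons, List.map_map]
      rfl
    have hle : u.length ≤ (f 0).length := by
      rw [hulen, hf0]
      simp only [List.length_append, List.length_replicate]
      omega
    rw [hsplit, List.take_append_of_le_length hle]
    calc ((f 0).take u.length).count true ≤ (f 0).count true :=
          ((f 0).take_sublist _).count_le _
      _ = s 1 := by rw [hf0]; simp [List.count_append, List.count_replicate]
  have key := hpn u hinf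
  rw [hcount] at key
  omega
end
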